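/- Let G be a finite simple connected graph, d ≥ 1 an integer, and let (A, B) be a minimal d-cut of G. If u ∈ B is a vertex whose neighborhood is nonempty and satisfies N(u) ⊆ A, then B = {u}, and consequently the edge cut E(A, B) is exactly the set of edges incident with u. -/
import Mathlib


variable {V : Type*}

/-- A `d`-cut of a simple graph `G`: a partition `(A, B)` of the vertex set into two
nonempty parts such that every vertex of `A` has at most `d` neighbors in `B` and
every vertex of `B` has at most `d` neighbors in `A`. -/
def IsDCut (G : SimpleGraph V) (d : ℕ) (A B : Set V) : Prop :=
  A.Nonempty ∧ B.Nonempty ∧ Disjoint A B ∧ A ∪ B = Set.univ ∧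
    (∀ v ∈ A, (G.neighborSet v ∩ B).ncard ≤ d) ∧
    (∀ v ∈ B, (G.neighborSet v ∩ A).ncard ≤ d)

/-- A vertex set `T` is monochromatic if every `d`-cut of `G` has `T` entirely on one side. -/
def Monochromatic (G : SimpleGraph V) (d : ℕ) (T : Set V) : Prop :=
  ∀ A B : Set V, IsDCut G d A B → T ⊆ A ∨ T ⊆ B

/-- The edge cut of a cut `(A, B)`: the set of edges of `G` with one endpoint in `A`
and the other endpoint in `B`. -/
def edgeCut (G : SimpleGraph V) (A B : Set V) : Set (Sym2 V) :=
  {e | e ∈ G.edgeSet ∧ ∃ u v, e = s(u, v) ∧ u ∈ A ∧ v ∈ B}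

/-- A minimal `d`-cut: no `d`-cut has an edge cut that is a proper subset of its edge cut. -/
def IsMinimalDCut (G : SimpleGraph V) (d : ℕ) (A B : Set V) : Prop :=
  IsDCut G d A B ∧ ∀ A' B' : Set V, IsDCut G d A' B' → ¬ edgeCut G A' B' ⊂ edgeCut G A B

/-- A maximal `d`-cut: no `d`-cut has an edge cut that properly contains its edge cut. -/
def IsMaximalDCut (G : SimpleGraph V) (d : ℕ) (A B : Set V) : Prop :=
  IsDCut G d A B ∧ ∀ A' B' : Set V, IsDCut G d A' B' → ¬ edgeCut G A B ⊂ edgeCut G A' B'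

/-- In a connected graph, if `(A, B)` is a minimal `d`-cut and `u ∈ B` has a nonempty
neighborhood entirely contained in `A`, then `B = {u}` and the edge cut is exactly
the set of edges incident with `u`. -/
theorem minimal_dcut_isolated_side [Fintype V] (G : SimpleGraph V) (d : ℕ)
    (hd : 1 ≤ d) (hconn : G.Connected) (A B : Set V)
    (hmin : IsMinimalDCut G d A B) (u : V) (hu : u ∈ B)
    (hne : (G.neighborSet u).Nonempty) (hsub : G.neighborSet u ⊆ A) :
    B = {u} ∧ edgeCut G A B = {e | e ∈ G.edgeSet ∧ u ∈ e} := by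
  obtain ⟨⟨hA, hB, hdisj, huniv, hdA, hdB⟩, hminimal⟩ := hmin
  have huA : u ∉ A := fun h => hdisj.ne_of_mem h hu rfl
  -- the cut ({u}ᶜ, {u}) is a d-cut
  have hcut' : IsDCut G d ({u}ᶜ : Set V) {u} := by
    refine ⟨?_, ⟨u, rfl⟩, ?_, Set.compl_union_self _, ?_, ?_⟩
    · obtain ⟨a, ha⟩ := hA
      exact ⟨a, fun h => huA (by rwa [Set.mem_singleton_iff.mp h] at ha)⟩
    · exact disjoint_compl_left
    · intro v _
      calc (G.neighborSet v ∩ {u}).ncard ≤ ({u} : Set V).ncard :=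
            Set.ncard_le_ncard Set.inter_subset_right (Set.finite_singleton u)
        _ = 1 := Set.ncard_singleton u
        _ ≤ d := hd
    · intro v hv
      rw [Set.mem_singleton_iff.mp hv]
      have hsub2 : G.neighborSet u ∩ ({u}ᶜ : Set V) ⊆ G.neighborSet u ∩ A :=
        fun x hx => ⟨hx.1, hsub hx.1⟩
      exact le_trans (Set.ncard_le_ncard hsub2 (Set.toFinite _)) (hdB u hu)
  -- its edge cut is contained in edgeCut A B
  have hsubcut : edgeCut G ({u}ᶜ : Set V) {u} ⊆ edgeCut G A B := by
    rintro e ⟨he, v, w, rfl, hv, hw⟩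
    rw [Set.mem_singleton_iff.mp hw] at he ⊢
    have hadj : G.Adj v u := he
    exact ⟨he, v, u, rfl, hsub hadj.symm, hu⟩
  have heq : edgeCut G ({u}ᶜ : Set V) {u} = edgeCut G A B := by
    by_contra hne'
    exact hminimal _ _ hcut' ⟨hsubcut, fun h => hne' (le_antisymm hsubcut h)⟩
  -- every edge of the cut is incident to u
  have hkey : ∀ e ∈ edgeCut G A B, u ∈ e := by
    intro e he
    rw [← heq] at he
    obtain ⟨_, v, w, rfl, _, hw⟩ := he
    rw [Set.mem_singleton_iff.mp hw]
    simp
  -- B \ {u} is closed under adjacency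
  have hclosed : ∀ x y, x ∈ B → x ≠ u → G.Adj x y → y ∈ B ∧ y ≠ u := by
    intro x y hxB hxu hadj
    have hyB : y ∈ B := by
      by_contra hyB
      have hyA : y ∈ A := by
        have := Set.eq_univ_iff_forall.mp huniv y
        rcases this with h | h
        · exact h
        · exact absurd h hyB
      have hmem : s(y, x) ∈ edgeCut G A B :=
        ⟨hadj.symm, y, x, rfl, hyA, hxB⟩
      have := hkey _ hmem
      rw [Sym2.mem_iff] at this
      rcases this with h | h
      · exact huA (h ▸ hyA)
      · exact hxu h.symm
    refine ⟨hyB, fun hyu => ?_⟩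
    subst hyu
    exact hdisj.ne_of_mem (hsub hadj.symm) hxB rfl
  -- connectivity: B = {u}
  have hBeq : B = {u} := by
    ext w
    simp only [Set.mem_singleton_iff]
    constructor
    · intro hwB
      by_contra hwu
      obtain ⟨p⟩ := hconn.preconnected w u
      have : ∀ {a b : V} (_ : G.Walk a b), a ∈ B → a ≠ u → b ∈ B ∧ b ≠ u := by
        intro a b p
        induction p with
        | nil => exact fun h h' => ⟨h, h'⟩
        | cons h q ih =>
          intro ha ha'
          obtain ⟨h1, h2⟩ := hclosed _ _ ha ha' h
          exact ih h1 h2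
      exact (this p hwB hwu).2 rfl
    · intro h; exact h ▸ hu
  refine ⟨hBeq, ?_⟩
  ext e
  constructor
  · rintro ⟨he, v, w, rfl, _, hw⟩
    rw [hBeq] at hw
    exact ⟨he, by rw [Set.mem_singleton_iff.mp hw]; simp⟩
  · rintro ⟨he, hue⟩
    induction e with
    | h v w =>
      refine ⟨he, ?_⟩
      rw [Sym2.mem_iff] at hue
      have hadj : G.Adj v w := he
      rcases hue with rfl | rfl
      · exact ⟨w, u, Sym2.eq_swap, hsub hadj, hBeq ▸ hu⟩
      · exact ⟨v, u, rfl, hsub hadj.symm, hBeq ▸ hu⟩
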